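/- Let n ≥ 1, let V ⊆ ℝ^{2n} be open, and let Z ⊂ V be nonempty and compact. Suppose H : ℝ^{2n} → ℝ is smooth, its support is a compact subset of V, min_Z H > 0, and X_H has no fast periodic orbit. Then for every C with 0 < C < min_Z H there exists K ∈ 𝓗(V,Z) such that C ≤ max K < min_Z H and X_K has no fast periodic orbit. -/

import Mathlib

open scoped RealInnerProductSpace ENNReal NNReal Topology
open Metric Set

noncomputable section

/-- `ℝ^{2n}` identified with `ℂ^n`, with the standard (real) inner product and
the standard complex structure `J` given by multiplication by `i`. -/
abbrev Esp (n : ℕ) := EuclideanSpace ℂ (Fin n)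

variable {n : ℕ}

/-- The Hamiltonian vector field `X_H = J ∇H` of `H : ℝ^{2n} → ℝ`. -/
def hamVF (H : Esp n → ℝ) (x : Esp n) : Esp n := Complex.I • gradient H x

/-- A nonconstant `T`-periodic orbit of the Hamiltonian flow of `H`:
a nonconstant solution `γ` of `γ' = J∇H(γ)` with `γ (t + T) = γ t`. -/
def IsPeriodicOrbit (H : Esp n → ℝ) (γ : ℝ → Esp n) (T : ℝ) : Prop :=
  0 < T ∧ (∀ t, HasDerivAt γ (hamVF H (γ t)) t) ∧
    (∀ t, γ (t + T) = γ t) ∧ ∃ t₀ t₁, γ t₀ ≠ γ t₁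

/-- `H` has a fast (period `≤ 1`) nonconstant periodic orbit. -/
def HasFastOrbit (H : Esp n → ℝ) : Prop :=
  ∃ γ T, IsPeriodicOrbit H γ T ∧ T ≤ 1

/-- The symplectic action of a `1`-periodic loop `γ` with respect to the
(possibly time-dependent) Hamiltonian `H`:
`A_H(γ) = -(1/2)∫₀¹ ⟨Jγ(t), γ'(t)⟩ dt + ∫₀¹ H(t, γ(t)) dt`. -/
def action (H : ℝ → Esp n → ℝ) (γ : ℝ → Esp n) : ℝ :=
  -(1 / 2) * (∫ t in (0:ℝ)..1, ⟪(Complex.I • γ t : Esp n), deriv γ t⟫) +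
    ∫ t in (0:ℝ)..1, H t (γ t)

/-- The class `𝓗(V, Z)`: smooth functions on `ℝ^{2n}` with compact support
contained in `V`, constant on a neighborhood of `Z`, whose value on `Z` is the
maximum of `H`. -/
def InHclass (V Z : Set (Esp n)) (H : Esp n → ℝ) : Prop :=
  ContDiff ℝ (⊤ : ℕ∞) H ∧ IsCompact (tsupport H) ∧ tsupport H ⊆ V ∧
    (∃ U, IsOpen U ∧ Z ⊆ U ∧ ∃ c : ℝ, ∀ x ∈ U, H x = c) ∧
    ∀ z ∈ Z, ∀ x, H x ≤ H z

/-- The relative Hofer–Zehnder capacity `c_HZ(V, Z)`: the supremum of `max H`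
over all `H ∈ 𝓗(V, Z)` having no fast nonconstant periodic orbit (for `z ∈ Z`,
`H z = max H`). -/
def relCap (V Z : Set (Esp n)) : ℝ≥0∞ :=
  sSup {c | ∃ H, InHclass V Z H ∧ ¬ HasFastOrbit H ∧
    ∃ z ∈ Z, c = ENNReal.ofReal (H z)}


lemma exists_cutoff (C c' : ℝ) (hC : 0 < C) (hcc : C < c') :
    ∃ f φ : ℝ → ℝ, (∀ s, HasDerivAt f (φ s) s) ∧ ContDiff ℝ (⊤ : ℕ∞) f ∧
      (∀ s, 0 ≤ φ s) ∧ (∀ s, φ s ≤ 1) ∧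
      f 0 = 0 ∧ (∀ s, c' ≤ s → f s = C) ∧ (∀ s, f s ≤ C) := by
  set d := c' - C with hd
  have hd0 : 0 < d := by simp [hd]; linarith
  set b : ContDiffBump (c' / 2) :=
    ⟨C / 2 + d / 8, C / 2 + d / 4, by positivity, by linarith⟩ with hb
  have hbIn : b.rIn = C / 2 + d / 8 := rfl
  have hbOut : b.rOut = C / 2 + d / 4 := rfl
  set I := ∫ x, b x with hI
  have hIC : C ≤ I := by
    have h2r := b.measure_closedBall_le_integral MeasureTheory.volume
    rw [MeasureTheory.measureReal_def, Real.volume_closedBall, ENNReal.toReal_ofReal (by rw [hbIn]; positivity)] at h2r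
    rw [hbIn] at h2r
    linarith
  have hI0 : 0 < I := lt_of_lt_of_le hC hIC
  set a := C / I with ha
  have ha0 : 0 ≤ a := by positivity
  have ha1 : a ≤ 1 := by rw [ha, div_le_one hI0]; exact hIC
  set φ : ℝ → ℝ := fun s => a * b s with hφ
  have hφc : Continuous φ := continuous_const.mul b.continuous
  set f : ℝ → ℝ := fun s => ∫ t in (0:ℝ)..s, φ t with hfdef
  have hf : ∀ s, HasDerivAt f (φ s) s := fun s =>
    (hφc.integral_hasStrictDerivAt 0 s).hasDerivAt
  have hφ0 : ∀ s, 0 ≤ φ s := fun s => mul_nonneg ha0 b.nonneg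
  have hφ1 : ∀ s, φ s ≤ 1 := fun s =>
    le_trans (mul_le_of_le_one_right ha0 b.le_one) ha1
  -- support of φ
  have hsupp : Function.support φ ⊆ Ioc 0 c' := by
    intro t ht
    have hbt : b t ≠ 0 := by
      intro h; apply ht; show a * b t = 0; rw [h, mul_zero]
    have := Function.mem_support.mpr hbt
    rw [b.support_eq, mem_ball, Real.dist_eq, hbOut] at this
    have h1 := abs_lt.mp this
    constructor <;> [linarith [h1.1]; linarith [h1.2]]
  have hfC : ∀ s, c' ≤ s → f s = C := by
    intro s hs
    have hsub : Function.support φ ⊆ Ioc 0 s := hsupp.trans (Ioc_subset_Ioc_right hs)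
    rw [hfdef]
    simp only
    rw [intervalIntegral.integral_eq_integral_of_support_subset hsub]
    rw [hφ]
    simp only
    rw [MeasureTheory.integral_const_mul, ha, div_mul_cancel₀ _ hI0.ne']
  have hmono : ∀ s u : ℝ, s ≤ u → f s ≤ f u := by
    intro s u hsu
    have h1 : f u = f s + ∫ t in s..u, φ t := by
      rw [hfdef]
      simp only
      rw [intervalIntegral.integral_add_adjacent_intervals
        (hφc.intervalIntegrable 0 s) (hφc.intervalIntegrable s u)]
    have h2 : 0 ≤ ∫ t in s..u, φ t :=
      intervalIntegral.integral_nonneg hsu (fun x _ => hφ0 x)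
    linarith
  have hfle : ∀ s, f s ≤ C := by
    intro s
    rcases le_total s c' with h | h
    · calc f s ≤ f c' := hmono s c' h
        _ = C := hfC c' le_rfl
    · rw [hfC s h]
  have hsm : ContDiff ℝ (⊤ : ℕ∞) f := by
    rw [show ((⊤ : ℕ∞) : WithTop ℕ∞) = (⊤ : ℕ∞) from rfl]
    apply contDiff_infty_iff_deriv.mpr
    constructor
    · exact fun s => (hf s).differentiableAt
    · have : deriv f = φ := funext fun s => (hf s).deriv
      rw [this]
      exact contDiff_const.mul b.contDiff
  exact ⟨f, φ, hf, hsm, hφ0, hφ1, intervalIntegral.integral_same, hfC, hfle⟩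

lemma inner_I_self (v : Esp n) : ⟪v, (Complex.I • v : Esp n)⟫ = 0 := by
  rw [PiLp.inner_apply]
  refine Finset.sum_eq_zero fun i _ => ?_
  simp [Complex.mul_re]
  ring

lemma gradient_comp (H : Esp n → ℝ) (hH : Differentiable ℝ H) {f φ : ℝ → ℝ}
    (hf : ∀ s, HasDerivAt f (φ s) s) (x : Esp n) :
    gradient (f ∘ H) x = φ (H x) • gradient H x := by
  have h1 : HasFDerivAt (f ∘ H) (φ (H x) • fderiv ℝ H x) x :=
    (hf (H x)).comp_hasFDerivAt x (hH x).hasFDerivAt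
  rw [gradient, gradient, h1.fderiv, map_smul]

lemma fderiv_apply_eq_inner (H : Esp n → ℝ) (x v : Esp n) :
    fderiv ℝ H x v = ⟪gradient H x, v⟫ := by
  rw [gradient, InnerProductSpace.toDual_symm_apply]

lemma no_fast_comp (H : Esp n → ℝ) (hH : Differentiable ℝ H)
    {f φ : ℝ → ℝ} (hf : ∀ s, HasDerivAt f (φ s) s)
    (hφ0 : ∀ s, 0 ≤ φ s) (hφ1 : ∀ s, φ s ≤ 1)
    (hno : ¬ HasFastOrbit H) : ¬ HasFastOrbit (f ∘ H) := by
  rintro ⟨γ, T, ⟨hT, hderiv, hper, t₀, t₁, hne⟩, hT1⟩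
  have hγ' : ∀ t, HasDerivAt γ (φ (H (γ t)) • (Complex.I • gradient H (γ t))) t := by
    intro t
    have h := hderiv t
    rw [hamVF, gradient_comp H hH hf, smul_comm] at h
    exact h
  -- H ∘ γ has zero derivative
  have hH0 : ∀ t, HasDerivAt (fun t => H (γ t)) 0 t := by
    intro t
    have h2 := (hH (γ t)).hasFDerivAt.comp_hasDerivAt t (hγ' t)
    have h3 : fderiv ℝ H (γ t) (φ (H (γ t)) • (Complex.I • gradient H (γ t))) = 0 := by
      rw [map_smul, smul_eq_mul, fderiv_apply_eq_inner, inner_I_self, mul_zero]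
    rwa [h3] at h2
  have hconst : ∀ t, H (γ t) = H (γ 0) := by
    intro t
    exact is_const_of_deriv_eq_zero (fun s => (hH0 s).differentiableAt)
      (fun s => (hH0 s).deriv) t 0
  set lam := φ (H (γ 0)) with hlam
  have hγ'' : ∀ t, HasDerivAt γ (lam • hamVF H (γ t)) t := by
    intro t
    have h := hγ' t
    rw [hconst t] at h
    exact h
  have hlam0 := hφ0 (H (γ 0))
  rcases eq_or_lt_of_le hlam0 with h0 | hpos
  · -- lam = 0 : γ constant, contradiction
    have hz : ∀ s, HasDerivAt γ (0 : Esp n) s := by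
      intro s
      have h := hγ'' s
      rw [show lam = 0 from h0.symm, zero_smul] at h
      exact h
    exact hne (is_const_of_deriv_eq_zero (fun s => (hz s).differentiableAt)
      (fun s => (hz s).deriv) t₀ t₁)
  · have hposl : 0 < lam := hpos
    have hne0 : lam ≠ 0 := hposl.ne'
    apply hno
    refine ⟨fun t => γ (lam⁻¹ * t), lam * T, ⟨mul_pos hposl hT, ?_, ?_, ?_⟩, ?_⟩
    · intro t
      have hin : HasDerivAt (fun t : ℝ => lam⁻¹ * t) lam⁻¹ t := by
        simpa using (hasDerivAt_id t).const_mul lam⁻¹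
      have h := (hγ'' (lam⁻¹ * t)).scomp t hin
      rwa [smul_smul, inv_mul_cancel₀ hne0, one_smul] at h
    · intro t
      show γ (lam⁻¹ * (t + lam * T)) = γ (lam⁻¹ * t)
      rw [mul_add, inv_mul_cancel_left₀ hne0, hper]
    · refine ⟨lam * t₀, lam * t₁, ?_⟩
      show γ (lam⁻¹ * (lam * t₀)) ≠ γ (lam⁻¹ * (lam * t₁))
      rwa [inv_mul_cancel_left₀ hne0, inv_mul_cancel_left₀ hne0]
    · calc lam * T ≤ 1 * 1 := mul_le_mul (hφ1 _) hT1 hT.le zero_le_one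
        _ = 1 := one_mul 1

/-- **Cutoff lemma (Lemma 5.1 of Ginzburg–Gürel)** for open subsets of standard
`ℝ^{2n}`: if `H` is smooth with compact support in `V`, `min_Z H > 0`, and the
flow of `H` has no fast nonconstant periodic orbit, then for any `C` with
`0 < C < min_Z H` there is `K ∈ 𝓗(V, Z)` with `C ≤ max K < min_Z H` whose flow
has no fast nonconstant periodic orbit (for `z ∈ Z`, `K z = max K`). -/
theorem stmt_12 (n : ℕ) (hn : 1 ≤ n) (V Z : Set (Esp n)) (hV : IsOpen V)
    (hZcpt : IsCompact Z) (hZne : Z.Nonempty) (hZV : Z ⊆ V)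
    (H : Esp n → ℝ) (hsm : ContDiff ℝ (⊤ : ℕ∞) H)
    (hsupp_cpt : IsCompact (tsupport H)) (hsupp : tsupport H ⊆ V)
    (hminpos : 0 < sInf (H '' Z))
    (hnofast : ¬ HasFastOrbit H)
    (C : ℝ) (hC0 : 0 < C) (hC : C < sInf (H '' Z)) :
    ∃ K : Esp n → ℝ, InHclass V Z K ∧ ¬ HasFastOrbit K ∧
      ∀ z ∈ Z, C ≤ K z ∧ K z < sInf (H '' Z) := by
  classical
  set m := sInf (H '' Z) with hm
  set c' := (C + m) / 2 with hc'
  have hCc' : C < c' := by rw [hc']; linarith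
  have hc'm : c' < m := by rw [hc']; linarith
  obtain ⟨f, φ, hf, hfsm, hφ0, hφ1, hf0, hfC, hfle⟩ := exists_cutoff C c' hC0 hCc'
  have hHdiff : Differentiable ℝ H := hsm.differentiable (by simp)
  have hHz : ∀ z ∈ Z, c' < H z := by
    intro z hz
    have hbdd : BddBelow (H '' Z) := (hZcpt.image hsm.continuous).bddBelow
    have : m ≤ H z := csInf_le hbdd (mem_image_of_mem H hz)
    linarith
  have hKz : ∀ z ∈ Z, (f ∘ H) z = C := fun z hz => hfC (H z) (le_of_lt (hHz z hz))
  have hts : tsupport (f ∘ H) ⊆ tsupport H := by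
    apply closure_minimal _ (isClosed_closure)
    intro x hx
    by_contra hxs
    have hH0 : H x = 0 := image_eq_zero_of_notMem_tsupport hxs
    apply hx
    show f (H x) = 0
    rw [hH0, hf0]
  refine ⟨f ∘ H, ⟨hfsm.comp hsm, ?_, hts.trans hsupp, ?_, ?_⟩, ?_, ?_⟩
  · exact hsupp_cpt.of_isClosed_subset isClosed_closure hts
  · refine ⟨H ⁻¹' Ioi c', isOpen_Ioi.preimage hsm.continuous, fun z hz => hHz z hz, C, ?_⟩
    intro x hx
    exact hfC (H x) (le_of_lt hx)
  · intro z hz x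
    rw [hKz z hz]
    exact hfle (H x)
  · exact no_fast_comp H hHdiff hf hφ0 hφ1 hnofast
  · intro z hz
    rw [hKz z hz]
    exact ⟨le_rfl, hC⟩
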